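/- Let K ⊂ ℝ³ be a centrally symmetric convex body which is strongly convex with smooth boundary (K ∈ 𝒦̂). Then Θ(K) + Θ(X(π − Θ(K))K) = π. -/

import Mathlib

open MeasureTheory Real Set
open scoped RealInnerProductSpace

noncomputable section

/-- Euclidean 3-space. -/
abbrev E3 := EuclideanSpace ℝ (Fin 3)

/-- The point `(a, b, c)` of `ℝ³`. -/
def pt (a b c : ℝ) : E3 := (WithLp.equiv 2 (Fin 3 → ℝ)).symm ![a, b, c]

/-- The polar body `K° = {y : ⟪x, y⟫ ≤ 1 for all x ∈ K}`. -/
def polarBody (K : Set E3) : Set E3 := {y : E3 | ∀ x ∈ K, ⟪x, y⟫ ≤ 1}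

/-- The radial function `ρ_K(x) = max {t ≥ 0 : t • x ∈ K}`. -/
def radial (K : Set E3) (x : E3) : ℝ := sSup {t : ℝ | 0 ≤ t ∧ t • x ∈ K}

/-- The spherical parametrization `P(α, β)`. -/
def sphP (α β : ℝ) : E3 := pt (cos α) (sin α * cos β) (sin α * sin β)

/-- Rotation by angle `θ` about the `x`-axis. -/
def rotX (θ : ℝ) (p : E3) : E3 :=
  pt (p 0) (cos θ * p 1 - sin θ * p 2) (sin θ * p 1 + cos θ * p 2)

/-- Rotation by angle `φ` about the `y`-axis. -/
def rotY (φ : ℝ) (p : E3) : E3 :=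
  pt (cos φ * p 0 + sin φ * p 2) (p 1) (-sin φ * p 0 + cos φ * p 2)

/-- Rotation by angle `ψ` about the `z`-axis. -/
def rotZ (ψ : ℝ) (p : E3) : E3 :=
  pt (cos ψ * p 0 - sin ψ * p 1) (sin ψ * p 0 + cos ψ * p 1) (p 2)

/-- `K ∈ 𝒦̂`: a centrally symmetric convex body in `ℝ³` which is strongly convex with
smooth boundary, i.e. `h_K = gauge²/2` is `C^∞` away from the origin and has positive
definite Hessian at every point of the unit sphere. -/
def IsKhat (K : Set E3) : Prop :=
  IsCompact K ∧ Convex ℝ K ∧ (interior K).Nonempty ∧ K = -K ∧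
    ContDiffOn ℝ (⊤ : ℕ∞) (fun x => gauge K x ^ 2 / 2) {0}ᶜ ∧
    ∀ x : E3, ‖x‖ = 1 → ∀ v : E3, v ≠ 0 →
      0 < fderiv ℝ (fderiv ℝ (fun y => gauge K y ^ 2 / 2)) x v v

/-- `Θ` satisfies the defining property of `Θ(K)`. -/
def ThetaEq (K : Set E3) (Θ : ℝ) : Prop :=
  Θ ∈ Ioo 0 π ∧
    ∫ β in (0:ℝ)..Θ, ∫ α in (0:ℝ)..π, radial K (sphP α β) ^ 3 * sin α
      = ∫ β in Θ..π, ∫ α in (0:ℝ)..π, radial K (sphP α β) ^ 3 * sin α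

/-- `Φ` satisfies the defining property of `Φ(K)`. -/
def PhiEq (K : Set E3) (Φ : ℝ) : Prop :=
  Φ ∈ Ioo 0 π ∧
    ∫ α in (0:ℝ)..Φ, radial K (sphP α 0) ^ 2 = ∫ α in Φ..π, radial K (sphP α 0) ^ 2

/-- `Ψ` satisfies the defining property of `Ψ(K)`, where `Θ = Θ(K)`. -/
def PsiEq (K : Set E3) (Θ Ψ : ℝ) : Prop :=
  Ψ ∈ Ioo 0 π ∧
    ∫ α in (0:ℝ)..Ψ, radial K (sphP α Θ) ^ 2 = ∫ α in Ψ..π, radial K (sphP α Θ) ^ 2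

/-- The unitriangular map whose inverse is the matrix `𝒜(K)` (for `Θ = Θ(K)`, `Φ = Φ(K)`,
`Ψ = Ψ(K)`); thus the body `𝒜(K) K` is the preimage `shear Θ Φ Ψ ⁻¹' K`. -/
def shear (Θ Φ Ψ : ℝ) (p : E3) : E3 :=
  pt (p 0 + p 1 / tan Φ + p 2 / (sin Θ * tan Ψ)) (p 1 + p 2 / tan Θ) (p 2)

/-- `v₁ = vol(L ∩ {x ≥ 0, y ≥ 0, z ≥ 0})`. -/
def vol₁ (L : Set E3) : ℝ := (volume (L ∩ {p : E3 | 0 ≤ p 0 ∧ 0 ≤ p 1 ∧ 0 ≤ p 2})).toReal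

/-- `v₂ = vol(L ∩ {x ≤ 0, y ≥ 0, z ≥ 0})`. -/
def vol₂ (L : Set E3) : ℝ := (volume (L ∩ {p : E3 | p 0 ≤ 0 ∧ 0 ≤ p 1 ∧ 0 ≤ p 2})).toReal

/-- `v₃ = vol(L ∩ {x ≤ 0, y ≤ 0, z ≥ 0})`. -/
def vol₃ (L : Set E3) : ℝ := (volume (L ∩ {p : E3 | p 0 ≤ 0 ∧ p 1 ≤ 0 ∧ 0 ≤ p 2})).toReal

/-- `v₄ = vol(L ∩ {x ≥ 0, y ≤ 0, z ≥ 0})`. -/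
def vol₄ (L : Set E3) : ℝ := (volume (L ∩ {p : E3 | 0 ≤ p 0 ∧ p 1 ≤ 0 ∧ 0 ≤ p 2})).toReal

/-- `F` applied to the transformed body `L' = 𝒜(K) K`. -/
def Ffun (L : Set E3) : ℝ :=
  (μH[2] (L ∩ {p : E3 | p 0 = 0 ∧ 0 ≤ p 1 ∧ 0 ≤ p 2})).toReal -
    (μH[2] (L ∩ {p : E3 | p 0 = 0 ∧ p 1 ≤ 0 ∧ 0 ≤ p 2})).toReal

/-- `G = v₁ + v₃ - v₂ - v₄` applied to the transformed body `L' = 𝒜(K) K`. -/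
def Gfun (L : Set E3) : ℝ := vol₁ L + vol₃ L - vol₂ L - vol₄ L

/-- `H = v₁ + v₄ - v₂ - v₃` applied to the transformed body `L' = 𝒜(K) K`. -/
def Hfun (L : Set E3) : ℝ := vol₁ L + vol₄ L - vol₂ L - vol₃ L

/-- Condition (★). -/
def StarCond (K : Set E3) : Prop :=
  volume (K ∩ {p : E3 | 0 ≤ p 0 ∧ 0 ≤ p 1 ∧ 0 ≤ p 2})
      = volume (K ∩ {p : E3 | p 0 ≤ 0 ∧ 0 ≤ p 1 ∧ 0 ≤ p 2}) ∧
    volume (K ∩ {p : E3 | p 0 ≤ 0 ∧ 0 ≤ p 1 ∧ 0 ≤ p 2})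
      = volume (K ∩ {p : E3 | p 0 ≤ 0 ∧ p 1 ≤ 0 ∧ 0 ≤ p 2}) ∧
    volume (K ∩ {p : E3 | p 0 ≤ 0 ∧ p 1 ≤ 0 ∧ 0 ≤ p 2})
      = volume (K ∩ {p : E3 | 0 ≤ p 0 ∧ p 1 ≤ 0 ∧ 0 ≤ p 2}) ∧
    μH[2] (K ∩ {p : E3 | p 0 = 0 ∧ 0 ≤ p 1 ∧ 0 ≤ p 2})
      = μH[2] (K ∩ {p : E3 | p 0 = 0 ∧ p 1 ≤ 0 ∧ 0 ≤ p 2}) ∧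
    μH[2] (K ∩ {p : E3 | p 1 = 0 ∧ 0 ≤ p 0 ∧ 0 ≤ p 2})
      = μH[2] (K ∩ {p : E3 | p 1 = 0 ∧ 0 ≤ p 0 ∧ p 2 ≤ 0}) ∧
    μH[2] (K ∩ {p : E3 | p 2 = 0 ∧ 0 ≤ p 0 ∧ 0 ≤ p 1})
      = μH[2] (K ∩ {p : E3 | p 2 = 0 ∧ p 0 ≤ 0 ∧ 0 ≤ p 1})

/-- The cube `[-1,1]³`. -/
def cube : Set E3 := {x : E3 | ∀ i, x i ∈ Icc (-1:ℝ) 1}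

/-- The cross product on `ℝ³`. -/
def cross (a b : E3) : E3 :=
  pt (a 1 * b 2 - a 2 * b 1) (a 2 * b 0 - a 0 * b 2) (a 0 * b 1 - a 1 * b 0)


namespace Theta54

lemma E3_ext {x y : E3} (h0 : x 0 = y 0) (h1 : x 1 = y 1) (h2 : x 2 = y 2) : x = y := by
  ext i; fin_cases i <;> assumption

lemma smul_apply' (t : ℝ) (x : E3) (i : Fin 3) : (t • x) i = t * x i := rfl

lemma neg_apply' (x : E3) (i : Fin 3) : (-x) i = -(x i) := rfl

lemma sphP_ne_zero (α β : ℝ) : sphP α β ≠ 0 := by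
  intro h
  have h0 : sphP α β 0 = 0 := by rw [h]; rfl
  have h1 : sphP α β 1 = 0 := by rw [h]; rfl
  have h2 : sphP α β 2 = 0 := by rw [h]; rfl
  have e0 : cos α = 0 := h0
  have e1 : sin α * cos β = 0 := h1
  have e2 : sin α * sin β = 0 := h2
  nlinarith [sin_sq_add_cos_sq α, sin_sq_add_cos_sq β]

lemma norm_sphP (α β : ℝ) : ‖sphP α β‖ = 1 := by
  have : ‖sphP α β‖ = Real.sqrt (∑ i : Fin 3, (sphP α β i) ^ 2) := by
    rw [EuclideanSpace.norm_eq]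
    congr 1
    refine Finset.sum_congr rfl fun i _ => ?_
    rw [Real.norm_eq_abs, sq_abs]
  rw [this, Fin.sum_univ_three]
  have e0 : sphP α β 0 = cos α := rfl
  have e1 : sphP α β 1 = sin α * cos β := rfl
  have e2 : sphP α β 2 = sin α * sin β := rfl
  rw [e0, e1, e2]
  have : cos α ^ 2 + (sin α * cos β) ^ 2 + (sin α * sin β) ^ 2 = 1 := by
    nlinarith [sin_sq_add_cos_sq α, sin_sq_add_cos_sq β]
  rw [this, Real.sqrt_one]

section radial

variable {K : Set E3}
variable (hKc : IsCompact K) (hKconv : Convex ℝ K) (hK0 : K ∈ nhds (0 : E3))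

include hKc hKconv hK0 in
lemma radial_eq_inv_gauge {x : E3} (hx : x ≠ 0) : radial K x = (gauge K x)⁻¹ := by
  have habs : Absorbent ℝ K := absorbent_nhds_zero hK0
  have hb : Bornology.IsVonNBounded ℝ K := NormedSpace.isVonNBounded_of_isBounded _ hKc.isBounded
  have hg : 0 < gauge K x := (gauge_pos habs hb).2 hx
  have hclos : closure K = K := hKc.isClosed.closure_eq
  refine IsGreatest.csSup_eq ⟨⟨inv_nonneg.2 hg.le, ?_⟩, fun t ht => ?_⟩
  · have : gauge K ((gauge K x)⁻¹ • x) ≤ 1 := by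
      rw [gauge_smul_of_nonneg (inv_nonneg.2 hg.le)]
      simp [inv_mul_cancel₀ hg.ne']
    have := (gauge_le_one_iff_mem_closure hKconv hK0).1 this
    rwa [hclos] at this
  · obtain ⟨ht0, htK⟩ := ht
    have : gauge K (t • x) ≤ 1 := gauge_le_one_of_mem htK
    rw [gauge_smul_of_nonneg ht0, smul_eq_mul] at this
    rw [inv_eq_one_div, le_div_iff₀ hg]; exact this

end radial

lemma rotX_rotX (θ : ℝ) (p : E3) : rotX (-θ) (rotX θ p) = p := by
  apply E3_ext
  · rfl
  · show cos (-θ) * (cos θ * p 1 - sin θ * p 2) - sin (-θ) * (sin θ * p 1 + cos θ * p 2) = p 1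
    rw [Real.cos_neg, Real.sin_neg]
    linear_combination (p 1) * Real.sin_sq_add_cos_sq θ
  · show sin (-θ) * (cos θ * p 1 - sin θ * p 2) + cos (-θ) * (sin θ * p 1 + cos θ * p 2) = p 2
    rw [Real.cos_neg, Real.sin_neg]
    linear_combination (p 2) * Real.sin_sq_add_cos_sq θ

lemma rotX_rotX' (θ : ℝ) (p : E3) : rotX θ (rotX (-θ) p) = p := by
  have := rotX_rotX (-θ) p
  rwa [neg_neg] at this

lemma rotX_smul (θ : ℝ) (t : ℝ) (p : E3) : rotX θ (t • p) = t • rotX θ p := by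
  apply E3_ext
  · show (t • p) 0 = t * (rotX θ p) 0
    rw [smul_apply']; rfl
  · show cos θ * (t • p) 1 - sin θ * (t • p) 2 = t * (cos θ * p 1 - sin θ * p 2)
    rw [smul_apply', smul_apply']; ring
  · show sin θ * (t • p) 1 + cos θ * (t • p) 2 = t * (sin θ * p 1 + cos θ * p 2)
    rw [smul_apply', smul_apply']; ring

lemma radial_rotX_image (K : Set E3) (θ : ℝ) (y : E3) :
    radial (rotX θ '' K) y = radial K (rotX (-θ) y) := by
  unfold radial
  congr 1
  ext t
  simp only [Set.mem_setOf_eq, and_congr_right_iff]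
  intro _
  constructor
  · rintro ⟨k, hk, hke⟩
    have : rotX (-θ) (rotX θ k) = rotX (-θ) (t • y) := by rw [hke]
    rw [rotX_rotX, rotX_smul] at this
    rwa [← this]
  · intro h
    exact ⟨t • rotX (-θ) y, h, by rw [rotX_smul, rotX_rotX']⟩

lemma rotX_neg_sphP (θ α β : ℝ) : rotX (-θ) (sphP α β) = sphP α (β - θ) := by
  apply E3_ext
  · rfl
  · show cos (-θ) * (sin α * cos β) - sin (-θ) * (sin α * sin β) = sin α * cos (β - θ)
    rw [Real.cos_neg, Real.sin_neg, Real.cos_sub]; ring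
  · show sin (-θ) * (sin α * cos β) + cos (-θ) * (sin α * sin β) = sin α * sin (β - θ)
    rw [Real.cos_neg, Real.sin_neg, Real.sin_sub]; ring

lemma sphP_add_pi (α β : ℝ) : sphP α (β + π) = -sphP (π - α) β := by
  apply E3_ext
  · show cos α = -cos (π - α)
    rw [Real.cos_pi_sub]; ring
  · show sin α * cos (β + π) = -(sin (π - α) * cos β)
    rw [Real.cos_add_pi, Real.sin_pi_sub]; ring
  · show sin α * sin (β + π) = -(sin (π - α) * sin β)
    rw [Real.sin_add_pi, Real.sin_pi_sub]; ring

lemma radial_neg {K : Set E3} (hsym : K = -K) (x : E3) : radial K (-x) = radial K x := by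
  unfold radial
  congr 1
  ext t
  simp only [Set.mem_setOf_eq, and_congr_right_iff]
  intro _
  rw [smul_neg]
  constructor
  · intro h
    have : -(t • x) ∈ -K := by rwa [← hsym]
    simpa using this
  · intro h
    rw [hsym]
    simpa using h

end Theta54

/-- Lemma 5.4: `Θ(K) + Θ(X(π − Θ(K))K) = π` for every `K ∈ 𝒦̂`. -/
theorem theta_rotX_identity (K : Set E3) (hK : IsKhat K)
    (Θ Θ' : ℝ) (hΘ : ThetaEq K Θ) (hΘ' : ThetaEq (rotX (π - Θ) '' K) Θ') :
    Θ + Θ' = π := by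
  classical
  open Theta54 in
  obtain ⟨hKc, hKconv, hint, hsym, -, -⟩ := hK
  have h0int : (0 : E3) ∈ interior K := by
    obtain ⟨x, hx⟩ := hint
    have hx' : -x ∈ interior K := by
      rw [hsym]
      rw [show (-K : Set E3) = (Homeomorph.neg E3) ⁻¹' K from rfl,
        ← Homeomorph.preimage_interior]
      simpa using hx
    have hcomb := (hKconv.interior) hx hx' (by norm_num : (0:ℝ) ≤ 1/2)
      (by norm_num : (0:ℝ) ≤ 1/2) (by norm_num)
    have hzero : (1/2 : ℝ) • x + (1/2 : ℝ) • (-x) = 0 := by module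
    rwa [hzero] at hcomb
  have hK0 : K ∈ nhds (0 : E3) := mem_interior_iff_mem_nhds.1 h0int
  obtain ⟨ε, hε, hball⟩ := Metric.mem_nhds_iff.1 hK0
  have habs : Absorbent ℝ K := absorbent_nhds_zero hK0
  have hb : Bornology.IsVonNBounded ℝ K := NormedSpace.isVonNBounded_of_isBounded _ hKc.isBounded
  have hgpos : ∀ α β : ℝ, 0 < gauge K (sphP α β) :=
    fun α β => (gauge_pos habs hb).2 (sphP_ne_zero α β)
  have hgub : ∀ α β : ℝ, gauge K (sphP α β) ≤ 1 / ε := by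
    intro α β
    have := gauge_mono (absorbent_ball_zero hε) hball (sphP α β)
    rwa [gauge_ball hε.le, norm_sphP] at this
  have hrad : ∀ α β : ℝ, radial K (sphP α β) = (gauge K (sphP α β))⁻¹ :=
    fun α β => radial_eq_inv_gauge hKc hKconv hK0 (sphP_ne_zero α β)
  have hradlb : ∀ α β : ℝ, ε ≤ radial K (sphP α β) := by
    intro α β
    rw [hrad]
    calc ε = (1/ε)⁻¹ := by rw [one_div, inv_inv]
      _ ≤ (gauge K (sphP α β))⁻¹ := inv_anti₀ (hgpos α β) (hgub α β)
  have hcontrad : Continuous (fun p : ℝ × ℝ => radial K (sphP p.1 p.2)) := by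
    have heq : (fun p : ℝ × ℝ => radial K (sphP p.1 p.2))
        = fun p : ℝ × ℝ => (gauge K (sphP p.1 p.2))⁻¹ := funext fun p => hrad _ _
    rw [heq]
    have hsc : Continuous fun p : ℝ × ℝ => sphP p.1 p.2 := by
      show Continuous fun p : ℝ × ℝ =>
        (WithLp.equiv 2 (Fin 3 → ℝ)).symm ![cos p.1, sin p.1 * cos p.2, sin p.1 * sin p.2]
      apply Continuous.comp (PiLp.continuous_toLp 2 (fun _ : Fin 3 => ℝ))
      apply continuous_pi
      intro i; fin_cases i <;> simp <;> fun_prop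
    exact ((continuous_gauge hKconv hK0).comp hsc).inv₀ fun p => (hgpos p.1 p.2).ne'
  set F : ℝ → ℝ := fun t => ∫ α in (0:ℝ)..π, radial K (sphP α t) ^ 3 * sin α with hF
  have hFcont : Continuous F := by
    rw [hF]
    have hcu : Continuous (Function.uncurry
        fun (t : ℝ) (α : ℝ) => radial K (sphP α t) ^ 3 * sin α) := by
      apply Continuous.mul
      · exact (hcontrad.comp ((continuous_snd.prodMk continuous_fst))).pow 3
      · exact Real.continuous_sin.comp continuous_snd
    exact intervalIntegral.continuous_parametric_intervalIntegral_of_continuous' hcu 0 π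
  have hFI : ∀ a b : ℝ, IntervalIntegrable F volume a b :=
    fun a b => hFcont.intervalIntegrable a b
  have hIc : ∀ t : ℝ, Continuous fun α : ℝ => radial K (sphP α t) ^ 3 * sin α := by
    intro t
    exact ((hcontrad.comp (continuous_id.prodMk continuous_const)).pow 3).mul
      Real.continuous_sin
  have hFlb : ∀ t : ℝ, ε ^ 3 * 2 ≤ F t := by
    intro t
    have hle : (∫ α in (0:ℝ)..π, ε ^ 3 * sin α)
        ≤ ∫ α in (0:ℝ)..π, radial K (sphP α t) ^ 3 * sin α := by
      apply intervalIntegral.integral_mono_on pi_pos.le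
        ((continuous_const.mul Real.continuous_sin).intervalIntegrable 0 π)
        ((hIc t).intervalIntegrable 0 π)
      intro x hx
      have hs : 0 ≤ sin x := Real.sin_nonneg_of_nonneg_of_le_pi hx.1 hx.2
      exact mul_le_mul_of_nonneg_right (pow_le_pow_left₀ hε.le (hradlb x t) 3) hs
    have heval : (∫ α in (0:ℝ)..π, ε ^ 3 * sin α) = ε ^ 3 * 2 := by
      rw [intervalIntegral.integral_const_mul, integral_sin]
      norm_num
    rw [hF]
    simp only
    linarith
  have hmono : ∀ a b : ℝ, a ≤ b → ε ^ 3 * 2 * (b - a) ≤ ∫ x in a..b, F x := by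
    intro a b hab
    have := intervalIntegral.integral_mono_on hab (intervalIntegrable_const (c := ε ^ 3 * 2))
      (hFI a b) (fun x _ => hFlb x)
    rwa [intervalIntegral.integral_const, smul_eq_mul, mul_comm] at this
  have hFper : ∀ t : ℝ, F (t + π) = F t := by
    intro t
    rw [hF]
    simp only
    have step1 : (∫ α in (0:ℝ)..π, radial K (sphP α (t + π)) ^ 3 * sin α)
        = ∫ α in (0:ℝ)..π, radial K (sphP (π - α) t) ^ 3 * sin (π - α) := by
      apply intervalIntegral.integral_congr
      intro x _
      simp only
      rw [sphP_add_pi, radial_neg hsym, Real.sin_pi_sub]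
    have step2 : (∫ α in (0:ℝ)..π, radial K (sphP (π - α) t) ^ 3 * sin (π - α))
        = ∫ α in (π - π)..(π - 0), radial K (sphP α t) ^ 3 * sin α :=
      intervalIntegral.integral_comp_sub_left (fun α => radial K (sphP α t) ^ 3 * sin α) π
    rw [step1, step2]
    norm_num
  have hG : (fun β => ∫ α in (0:ℝ)..π, radial (rotX (π - Θ) '' K) (sphP α β) ^ 3 * sin α)
      = fun β => F (β + Θ) := by
    funext β
    have e1 : (∫ α in (0:ℝ)..π, radial (rotX (π - Θ) '' K) (sphP α β) ^ 3 * sin α)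
        = F (β - (π - Θ)) := by
      rw [hF]
      simp only
      apply intervalIntegral.integral_congr
      intro x _
      simp only
      rw [radial_rotX_image, rotX_neg_sphP]
    rw [e1]
    have e2 : β - (π - Θ) + π = β + Θ := by ring
    rw [← hFper (β - (π - Θ)), e2]
  have h1 : (∫ β in (0:ℝ)..Θ, F β) = ∫ β in Θ..π, F β := by
    simp only [hF]
    exact hΘ.2
  have h2 : (∫ β in (0:ℝ)..Θ', F (β + Θ)) = ∫ β in Θ'..π, F (β + Θ) := by
    have h := hΘ'.2
    rw [hG] at h
    exact h
  simp only [intervalIntegral.integral_comp_add_right, zero_add] at h2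
  rw [add_comm π Θ] at h2
  have hper2 : (∫ x in π..(Θ + π), F x) = ∫ x in (0:ℝ)..Θ, F x := by
    have hc := intervalIntegral.integral_comp_add_right (a := (0:ℝ)) (b := Θ) F π
    rw [zero_add] at hc
    rw [← hc]
    apply intervalIntegral.integral_congr
    intro x _
    exact hFper x
  have hadd : ∀ a b c : ℝ, (∫ x in a..b, F x) + ∫ x in b..c, F x = ∫ x in a..c, F x :=
    fun a b c => intervalIntegral.integral_add_adjacent_intervals (hFI a b) (hFI b c)
  have A1 := hadd Θ π (Θ + π)
  have A2 := hadd Θ (Θ' + Θ) (Θ + π)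
  have A3 := hadd Θ π (Θ' + Θ)
  have hzero : (∫ x in π..(Θ' + Θ), F x) = 0 := by linarith
  have hc : (0:ℝ) < ε ^ 3 * 2 := by positivity
  rcases lt_trichotomy (Θ' + Θ) π with hlt | heq | hgt
  · exfalso
    have hm := hmono (Θ' + Θ) π hlt.le
    have hsymm := intervalIntegral.integral_symm (μ := volume) (f := F) (Θ' + Θ) π
    nlinarith
  · linarith
  · exfalso
    have hm := hmono π (Θ' + Θ) hgt.le
    nlinarith
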